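/- When κ = 0, the ODE system ∂_t s_n(t) = −n·∑_{j=1}^{n−1} s_j(t)s_{n−j}(t), s_n(0) = 1, has the solution s_n(t) = (1/n)·L_{n−1}^{(1)}(2nt), where L_m^{(1)} is the Laguerre polynomial with parameter 1: L_m^{(1)}(x) = ∑_{k=0}^m binom(m+1, m−k)·(−x)^k/k!. -/

import Mathlib

open Finset Real

/-- `s n t = (1/n) L_{n-1}^{(1)}(2nt)` written explicitly through the Laguerre polynomial. -/
noncomputable def laguerreSol (n : ℕ) (t : ℝ) : ℝ :=
  (1 / (n : ℝ)) * ∑ k ∈ Finset.range n,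
    (Nat.choose n (n - 1 - k) : ℝ) * (-(2 * (n : ℝ) * t)) ^ k / (Nat.factorial k : ℝ)

/-- `dd k n t = [z^(n-k)] ((1+z) e^{-2nt z})^n`, explicitly. -/
noncomputable def dd (k n : ℕ) (t : ℝ) : ℝ :=
  ∑ i ∈ Finset.range n, (Nat.choose n (k + i) : ℝ) * (-(2 * (n : ℝ) * t)) ^ i /
    (Nat.factorial i : ℝ)

/-- `cc k n t` = sum over compositions of `n` into `k` positive parts of products of `laguerreSol`. -/
noncomputable def cc : ℕ → ℕ → ℝ → ℝ
  | 0, n, _ => if n = 0 then 1 else 0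
  | (k+1), n, t => ∑ j ∈ Finset.Icc 1 n, laguerreSol j t * cc k (n - j) t

lemma cc_succ (k n : ℕ) (t : ℝ) :
    cc (k+1) n t = ∑ j ∈ Finset.Icc 1 n, laguerreSol j t * cc k (n - j) t := rfl

lemma s_eq_dd (n : ℕ) (t : ℝ) : laguerreSol n t = (1 / (n : ℝ)) * dd 1 n t := by
  unfold laguerreSol dd
  congr 1
  refine Finset.sum_congr rfl fun i hi => ?_
  rw [Finset.mem_range] at hi
  congr 3
  rw [show n - 1 - i = n - (1 + i) by omega, Nat.choose_symm (by omega)]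

lemma dd_zero_t (k n : ℕ) (hn : 1 ≤ n) : dd k n 0 = (Nat.choose n k : ℝ) := by
  unfold dd
  rw [Finset.sum_eq_single 0]
  · simp
  · intro i _ hi
    simp [zero_pow hi]
  · intro h
    rw [Finset.mem_range] at h
    omega

lemma dd_of_lt (k n : ℕ) (h : n < k) (t : ℝ) : dd k n t = 0 := by
  unfold dd
  refine Finset.sum_eq_zero fun i _ => ?_
  rw [Nat.choose_eq_zero_of_lt (by omega)]
  simp

lemma dd_self (n : ℕ) (hn : 1 ≤ n) (t : ℝ) : dd n n t = 1 := by
  unfold dd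
  rw [Finset.sum_eq_single 0]
  · simp
  · intro i _ hi
    rw [Nat.choose_eq_zero_of_lt (by omega)]
    simp
  · intro h
    rw [Finset.mem_range] at h
    omega

lemma dd_poly (k n : ℕ) (t : ℝ) :
    dd k n t = ∑ i ∈ Finset.range n,
      ((Nat.choose n (k + i) : ℝ) * (-(2 * (n : ℝ))) ^ i / (Nat.factorial i : ℝ)) * t ^ i := by
  unfold dd
  refine Finset.sum_congr rfl fun i _ => ?_
  rw [show -(2 * (n:ℝ) * t) = (-(2 * (n:ℝ))) * t by ring, mul_pow]
  ring

lemma dd_deriv (k n : ℕ) (hk : 1 ≤ k) (t : ℝ) :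
    HasDerivAt (fun u => dd k n u) (-(2 * (n : ℝ)) * dd (k+1) n t) t := by
  have key : HasDerivAt (fun u => dd k n u)
      (∑ i ∈ Finset.range n, ((Nat.choose n (k + i) : ℝ) * (-(2 * (n : ℝ))) ^ i /
        (Nat.factorial i : ℝ)) * ((i:ℝ) * t ^ (i-1))) t := by
    have he : (fun u => dd k n u) = fun u => ∑ i ∈ Finset.range n,
        ((Nat.choose n (k + i) : ℝ) * (-(2 * (n : ℝ))) ^ i / (Nat.factorial i : ℝ)) * u ^ i := by
      funext u
      exact dd_poly k n u
    rw [he]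
    exact HasDerivAt.fun_sum fun i _ => (hasDerivAt_pow i t).const_mul _
  convert key using 1
  rcases Nat.eq_zero_or_pos n with h0 | hpos
  · subst h0
    simp [dd]
  · rw [show n = (n-1)+1 by omega, Finset.sum_range_succ']
    simp only [Nat.cast_zero, zero_mul, mul_zero, add_zero]
    unfold dd
    rw [Finset.mul_sum, show ((n-1)+1 : ℕ) = n by omega, show n = (n-1)+1 by omega,
      Finset.sum_range_succ]
    rw [Nat.choose_eq_zero_of_lt (show ((n-1)+1 : ℕ) < k + 1 + (n-1) by omega)]
    simp only [Nat.cast_zero, zero_mul, zero_div, mul_zero, add_zero]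
    refine Finset.sum_congr rfl fun i _ => ?_
    rw [show -(2 * (((n-1)+1 : ℕ):ℝ) * t) = (-(2 * (((n-1)+1 : ℕ):ℝ))) * t by ring, mul_pow,
      Nat.factorial_succ, show k + 1 + i = k + (i + 1) by omega]
    have hfac : ((Nat.factorial i : ℕ) : ℝ) ≠ 0 := Nat.cast_ne_zero.mpr (Nat.factorial_ne_zero i)
    push_cast
    field_simp
    ring

lemma s_deriv (n : ℕ) (hn : 1 ≤ n) (t : ℝ) :
    HasDerivAt (laguerreSol n) (-2 * dd 2 n t) t := by
  have he : laguerreSol n = fun u => (1 / (n : ℝ)) * dd 1 n u := funext fun u => s_eq_dd n u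
  rw [he]
  have hne : (n : ℝ) ≠ 0 := Nat.cast_ne_zero.mpr (by omega)
  have := (dd_deriv 1 n le_rfl t).const_mul (1 / (n : ℝ))
  refine this.congr_deriv ?_
  rw [← mul_assoc, show (1 / (n:ℝ)) * (-(2 * (n:ℝ))) = -2 by field_simp]

lemma s_one (t : ℝ) : laguerreSol 1 t = 1 := by
  unfold laguerreSol
  norm_num

lemma s_zero_t (n : ℕ) (hn : 1 ≤ n) : laguerreSol n 0 = 1 := by
  rw [s_eq_dd, dd_zero_t _ _ hn]
  rw [Nat.choose_one_right]
  field_simp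

lemma cc_of_lt (k n : ℕ) (h : n < k) (t : ℝ) : cc k n t = 0 := by
  induction k generalizing n with
  | zero => omega
  | succ k ih =>
    show (∑ j ∈ Finset.Icc 1 n, laguerreSol j t * cc k (n - j) t) = 0
    refine Finset.sum_eq_zero fun j hj => ?_
    rw [Finset.mem_Icc] at hj
    rw [ih (n - j) (by omega), mul_zero]

lemma cc_self (k : ℕ) (t : ℝ) : cc k k t = 1 := by
  induction k with
  | zero => rfl
  | succ k ih =>
    show (∑ j ∈ Finset.Icc 1 (k+1), laguerreSol j t * cc k (k + 1 - j) t) = 1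
    rw [Finset.sum_eq_single 1]
    · rw [s_one, Nat.add_sub_cancel, ih]; ring
    · intro j hj hj1
      rw [Finset.mem_Icc] at hj
      rw [cc_of_lt k (k+1-j) (by omega) t, mul_zero]
    · intro h
      simp at h

lemma cc_one (n : ℕ) (hn : 1 ≤ n) (t : ℝ) : cc 1 n t = laguerreSol n t := by
  show (∑ j ∈ Finset.Icc 1 n, laguerreSol j t * cc 0 (n - j) t) = laguerreSol n t
  rw [Finset.sum_eq_single n]
  · show laguerreSol n t * (if n - n = 0 then (1:ℝ) else 0) = _
    simp
  · intro j hj hjn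
    rw [Finset.mem_Icc] at hj
    show laguerreSol j t * (if n - j = 0 then (1:ℝ) else 0) = 0
    rw [if_neg (by omega), mul_zero]
  · intro h
    simp at h
    omega

lemma cc0 (m : ℕ) (t : ℝ) : cc 0 m t = if m = 0 then 1 else 0 := rfl

lemma hockey (m r : ℕ) : ∑ i ∈ Finset.range m, Nat.choose i r = Nat.choose m (r+1) := by
  induction m with
  | zero => simp
  | succ m ih => rw [Finset.sum_range_succ, ih, Nat.choose_succ_succ (m) (r), add_comm]

lemma hockey2 (m r : ℕ) : ∑ j ∈ Finset.Icc 1 m, Nat.choose (m - j) r = Nat.choose m (r+1) := by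
  rw [← Finset.Ico_add_one_right_eq_Icc, Finset.sum_Ico_eq_sum_range, show m + 1 - 1 = m by omega,
    ← hockey m r, ← Finset.sum_range_reflect (fun i => Nat.choose i r) m]
  refine Finset.sum_congr rfl fun i hi => ?_
  rw [Finset.mem_range] at hi
  congr 1
  omega

lemma cc_zero_t (k n : ℕ) (hk : 1 ≤ k) (hn : 1 ≤ n) :
    cc k n 0 = (Nat.choose (n-1) (k-1) : ℝ) := by
  induction k generalizing n with
  | zero => omega
  | succ k ih =>
    rcases Nat.eq_zero_or_pos k with h0 | hkpos
    · subst h0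
      rw [cc_one n hn, s_zero_t n hn]
      simp
    · rw [cc_succ]
      rw [← Finset.sum_subset (Finset.Icc_subset_Icc_right (show n - 1 ≤ n by omega))
        (fun j hj hj2 => ?_)]
      · have he : ∀ j ∈ Finset.Icc 1 (n-1), laguerreSol j 0 * cc k (n - j) 0
            = (Nat.choose ((n-1) - j) (k-1) : ℝ) := by
          intro j hj
          rw [Finset.mem_Icc] at hj
          rw [s_zero_t j hj.1, ih (n - j) hkpos (by omega), one_mul,
            show n - j - 1 = (n-1) - j by omega]
        rw [Finset.sum_congr rfl he, ← Nat.cast_sum, hockey2 (n-1) (k-1),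
          show k - 1 + 1 = k by omega]
        simp
      · have hj' : j = n := by
          simp only [Finset.mem_Icc] at hj hj2
          omega
        rw [hj', Nat.sub_self, cc_of_lt k 0 (by omega), mul_zero]

/-- triangle swap, type 1 -/
lemma swap1 (n : ℕ) (F : ℕ → ℕ → ℝ) :
    ∑ j ∈ Finset.Icc 1 n, ∑ p ∈ Finset.Icc 1 (n - j), F j p
      = ∑ p ∈ Finset.Icc 1 n, ∑ j ∈ Finset.Icc 1 (n - p), F j p := by
  refine Finset.sum_comm' fun x y => ?_
  simp only [Finset.mem_Icc]
  omega

/-- triangle swap, type 2 -/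
lemma swap2 (n : ℕ) (F : ℕ → ℕ → ℝ) :
    ∑ j ∈ Finset.Icc 1 n, ∑ p ∈ Finset.Icc 1 j, F j p
      = ∑ p ∈ Finset.Icc 1 n, ∑ j ∈ Finset.Icc p n, F j p := by
  refine Finset.sum_comm' fun x y => ?_
  simp only [Finset.mem_Icc]
  omega

/-- shift an `Icc p n` sum, killing the `j = p` term when it vanishes -/
lemma shift_sum (p n : ℕ) (hp : 1 ≤ p) (hpn : p ≤ n) (G : ℕ → ℝ) (h0 : G 0 = 0) :
    ∑ j ∈ Finset.Icc p n, G (j - p) = ∑ q ∈ Finset.Icc 1 (n - p), G q := by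
  rw [← Finset.Ico_add_one_right_eq_Icc, Finset.sum_Ico_eq_sum_range,
      show n + 1 - p = (n - p) + 1 by omega, Finset.sum_range_succ',
      show p + 0 - p = 0 by omega, h0, add_zero,
      ← Finset.Ico_add_one_right_eq_Icc, Finset.sum_Ico_eq_sum_range,
      show n - p + 1 - 1 = n - p by omega]
  refine Finset.sum_congr rfl fun i _ => ?_
  congr 1
  omega

noncomputable def W1 (k n : ℕ) (t : ℝ) : ℝ :=
  ∑ j ∈ Finset.Icc 1 n, (j : ℝ) * laguerreSol j t * cc k (n - j) t

lemma Wrec (k n : ℕ) (t : ℝ) :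
    ∑ p ∈ Finset.Icc 1 n, laguerreSol p t * W1 k (n - p) t = W1 (k+1) n t := by
  calc ∑ p ∈ Finset.Icc 1 n, laguerreSol p t * W1 k (n - p) t
      = ∑ p ∈ Finset.Icc 1 n, ∑ q ∈ Finset.Icc 1 (n - p),
          laguerreSol p t * ((q:ℝ) * laguerreSol q t * cc k (n - p - q) t) := by
        refine Finset.sum_congr rfl fun p _ => ?_
        rw [W1, Finset.mul_sum]
    _ = ∑ q ∈ Finset.Icc 1 n, ∑ p ∈ Finset.Icc 1 (n - q),
          laguerreSol p t * ((q:ℝ) * laguerreSol q t * cc k (n - p - q) t) :=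
        swap1 n _
    _ = W1 (k+1) n t := by
        rw [W1]
        refine Finset.sum_congr rfl fun q hq => ?_
        rw [Finset.mem_Icc] at hq
        rw [cc_succ, Finset.mul_sum]
        refine Finset.sum_congr rfl fun p hp => ?_
        rw [Finset.mem_Icc] at hp
        rw [show n - p - q = n - q - p by omega]
        ring

lemma Nlem (k : ℕ) : ∀ n : ℕ, ∀ t : ℝ, ((k:ℝ)+1) * W1 k n t = (n:ℝ) * cc (k+1) n t := by
  induction k with
  | zero =>
    intro n t
    simp only [Nat.cast_zero, zero_add, one_mul, W1, cc_succ, Finset.mul_sum]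
    refine Finset.sum_congr rfl fun j hj => ?_
    rw [Finset.mem_Icc] at hj
    rcases eq_or_lt_of_le hj.2 with hje | hjl
    · subst hje
      ring
    · rw [cc0, if_neg (by omega)]
      ring
  | succ k ih =>
    intro n t
    have expand : (n:ℝ) * cc (k+1+1) n t
        = W1 (k+1) n t + ∑ j ∈ Finset.Icc 1 n, laguerreSol j t * (((n-j:ℕ):ℝ) * cc (k+1) (n-j) t) := by
      rw [cc_succ, Finset.mul_sum, W1, ← Finset.sum_add_distrib]
      refine Finset.sum_congr rfl fun j hj => ?_
      rw [Finset.mem_Icc] at hj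
      have hc : ((n - j:ℕ):ℝ) = (n:ℝ) - (j:ℝ) := by
        push_cast [Nat.cast_sub hj.2]
        ring
      rw [hc]
      ring
    have step : ∀ j ∈ Finset.Icc 1 n, laguerreSol j t * (((n-j:ℕ):ℝ) * cc (k+1) (n-j) t)
        = laguerreSol j t * (((k:ℝ)+1) * W1 k (n-j) t) := by
      intro j _
      rw [← ih (n-j) t]
    rw [expand, Finset.sum_congr rfl step]
    have : ∑ j ∈ Finset.Icc 1 n, laguerreSol j t * (((k:ℝ)+1) * W1 k (n-j) t)
        = ((k:ℝ)+1) * ∑ j ∈ Finset.Icc 1 n, laguerreSol j t * W1 k (n-j) t := by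
      rw [Finset.mul_sum]
      refine Finset.sum_congr rfl fun j _ => by ring
    rw [this, Wrec k n t]
    push_cast
    ring

lemma W2lem (b n : ℕ) (t : ℝ) :
    ∑ j ∈ Finset.Icc 1 n, (j : ℝ) * cc 2 j t * cc b (n - j) t = 2 * W1 (b+1) n t := by
  have expand : ∑ j ∈ Finset.Icc 1 n, (j : ℝ) * cc 2 j t * cc b (n - j) t
      = (∑ j ∈ Finset.Icc 1 n, ∑ p ∈ Finset.Icc 1 j,
          (p:ℝ) * laguerreSol p t * (cc 1 (j-p) t * cc b (n-j) t))
        + (∑ j ∈ Finset.Icc 1 n, ∑ p ∈ Finset.Icc 1 j,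
          laguerreSol p t * (((j-p:ℕ):ℝ) * cc 1 (j-p) t * cc b (n-j) t)) := by
    rw [← Finset.sum_add_distrib]
    refine Finset.sum_congr rfl fun j hj => ?_
    rw [Finset.mem_Icc] at hj
    rw [← Finset.sum_add_distrib, cc_succ, Finset.mul_sum, Finset.sum_mul]
    refine Finset.sum_congr rfl fun p hp => ?_
    rw [Finset.mem_Icc] at hp
    have hc : ((j - p:ℕ):ℝ) = (j:ℝ) - (p:ℝ) := by
      push_cast [Nat.cast_sub hp.2]
      ring
    rw [hc]
    ring
  have hS1 : ∑ j ∈ Finset.Icc 1 n, ∑ p ∈ Finset.Icc 1 j,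
      (p:ℝ) * laguerreSol p t * (cc 1 (j-p) t * cc b (n-j) t) = W1 (b+1) n t := by
    rw [swap2 n _, W1]
    refine Finset.sum_congr rfl fun p hp => ?_
    rw [Finset.mem_Icc] at hp
    rw [← Finset.mul_sum]
    congr 1
    have hG : ∀ j ∈ Finset.Icc p n, cc 1 (j-p) t * cc b (n-j) t
        = (fun q => cc 1 q t * cc b ((n-p)-q) t) (j-p) := by
      intro j hj
      rw [Finset.mem_Icc] at hj
      simp only
      rw [show n - j = (n-p)-(j-p) by omega]
    rw [Finset.sum_congr rfl hG,
      shift_sum p n hp.1 hp.2 (fun q => cc 1 q t * cc b ((n-p)-q) t)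
        (by show cc 1 0 t * cc b ((n-p)-0) t = 0
            rw [cc_of_lt 1 0 (by omega) t, zero_mul]), cc_succ]
    refine Finset.sum_congr rfl fun q hq => ?_
    rw [Finset.mem_Icc] at hq
    show cc 1 q t * cc b ((n-p)-q) t = _
    rw [cc_one q hq.1]
  have hS2 : ∑ j ∈ Finset.Icc 1 n, ∑ p ∈ Finset.Icc 1 j,
      laguerreSol p t * (((j-p:ℕ):ℝ) * cc 1 (j-p) t * cc b (n-j) t) = W1 (b+1) n t := by
    rw [swap2 n _]
    have hinner : ∀ p ∈ Finset.Icc 1 n, ∑ j ∈ Finset.Icc p n,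
        laguerreSol p t * (((j-p:ℕ):ℝ) * cc 1 (j-p) t * cc b (n-j) t)
          = laguerreSol p t * W1 b (n-p) t := by
      intro p hp
      rw [Finset.mem_Icc] at hp
      rw [← Finset.mul_sum]
      congr 1
      have hG : ∀ j ∈ Finset.Icc p n, ((j-p:ℕ):ℝ) * cc 1 (j-p) t * cc b (n-j) t
          = (fun q : ℕ => (q:ℝ) * cc 1 q t * cc b ((n-p)-q) t) (j-p) := by
        intro j hj
        rw [Finset.mem_Icc] at hj
        show _ = ((j-p:ℕ):ℝ) * cc 1 (j-p) t * cc b ((n-p)-(j-p)) t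
        rw [show n - j = (n-p)-(j-p) by omega]
      rw [Finset.sum_congr rfl hG, shift_sum p n hp.1 hp.2
        (fun q : ℕ => (q:ℝ) * cc 1 q t * cc b ((n-p)-q) t)
        (by show ((0:ℕ):ℝ) * cc 1 0 t * cc b ((n-p)-0) t = 0
            norm_num), W1]
      refine Finset.sum_congr rfl fun q hq => ?_
      rw [Finset.mem_Icc] at hq
      show (q:ℝ) * cc 1 q t * cc b ((n-p)-q) t = _
      rw [cc_one q hq.1]
    rw [Finset.sum_congr rfl hinner, Wrec b n t]
  rw [expand, hS1, hS2]
  ring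

lemma cc_deriv (k n : ℕ) (t : ℝ) :
    HasDerivAt (fun u => cc (k+1) n u)
      (-2*((k:ℝ)+1) * ∑ j ∈ Finset.Icc 1 n, dd 2 j t * cc k (n - j) t) t := by
  induction k generalizing n t with
  | zero =>
    have key : HasDerivAt (fun u => ∑ j ∈ Finset.Icc 1 n, laguerreSol j u * cc 0 (n-j) u)
        (∑ j ∈ Finset.Icc 1 n, (-2 * dd 2 j t) * cc 0 (n-j) t) t := by
      refine HasDerivAt.fun_sum fun j hj => ?_
      rw [Finset.mem_Icc] at hj
      have h2 : HasDerivAt (fun u : ℝ => cc 0 (n-j) u) 0 t :=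
        hasDerivAt_const t (if n - j = 0 then (1:ℝ) else 0)
      have := (s_deriv j hj.1 t).mul h2
      exact this.congr_deriv (by ring)
    have hfun : (fun u => cc (0+1) n u)
        = fun u => ∑ j ∈ Finset.Icc 1 n, laguerreSol j u * cc 0 (n - j) u := rfl
    rw [hfun]
    convert key using 1
    rw [Finset.mul_sum]
    refine Finset.sum_congr rfl fun j _ => ?_
    push_cast
    ring
  | succ k ih =>
    have key : HasDerivAt (fun u => ∑ j ∈ Finset.Icc 1 n, laguerreSol j u * cc (k+1) (n-j) u)
        (∑ j ∈ Finset.Icc 1 n, ((-2 * dd 2 j t) * cc (k+1) (n-j) t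
          + laguerreSol j t *
            (-2*((k:ℝ)+1) * ∑ p ∈ Finset.Icc 1 (n-j), dd 2 p t * cc k (n-j-p) t))) t := by
      refine HasDerivAt.fun_sum fun j hj => ?_
      rw [Finset.mem_Icc] at hj
      exact (s_deriv j hj.1 t).mul (ih (n-j) t)
    have hfun : (fun u => cc (k+1+1) n u)
        = fun u => ∑ j ∈ Finset.Icc 1 n, laguerreSol j u * cc (k+1) (n - j) u := rfl
    rw [hfun]
    convert key using 1
    rw [Finset.sum_add_distrib]
    have hA : ∑ j ∈ Finset.Icc 1 n, (-2 * dd 2 j t) * cc (k+1) (n-j) t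
        = -2 * ∑ j ∈ Finset.Icc 1 n, dd 2 j t * cc (k+1) (n-j) t := by
      rw [Finset.mul_sum]
      exact Finset.sum_congr rfl fun j _ => by ring
    have hB : ∑ j ∈ Finset.Icc 1 n, laguerreSol j t *
          (-2*((k:ℝ)+1) * ∑ p ∈ Finset.Icc 1 (n-j), dd 2 p t * cc k (n-j-p) t)
        = -2*((k:ℝ)+1) * ∑ j ∈ Finset.Icc 1 n, dd 2 j t * cc (k+1) (n-j) t := by
      calc ∑ j ∈ Finset.Icc 1 n, laguerreSol j t *
              (-2*((k:ℝ)+1) * ∑ p ∈ Finset.Icc 1 (n-j), dd 2 p t * cc k (n-j-p) t)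
          = ∑ j ∈ Finset.Icc 1 n, ∑ p ∈ Finset.Icc 1 (n - j),
              laguerreSol j t * (-2*((k:ℝ)+1) * (dd 2 p t * cc k (n-j-p) t)) := by
            refine Finset.sum_congr rfl fun j _ => ?_
            rw [Finset.mul_sum, Finset.mul_sum]
        _ = ∑ p ∈ Finset.Icc 1 n, ∑ j ∈ Finset.Icc 1 (n - p),
              laguerreSol j t * (-2*((k:ℝ)+1) * (dd 2 p t * cc k (n-j-p) t)) := swap1 n _
        _ = ∑ p ∈ Finset.Icc 1 n, -2*((k:ℝ)+1) * (dd 2 p t * cc (k+1) (n-p) t) := by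
            refine Finset.sum_congr rfl fun p hp => ?_
            rw [Finset.mem_Icc] at hp
            rw [cc_succ, Finset.mul_sum, Finset.mul_sum]
            refine Finset.sum_congr rfl fun j hj => ?_
            rw [Finset.mem_Icc] at hj
            rw [show n - j - p = n - p - j by omega]
            ring
        _ = -2*((k:ℝ)+1) * ∑ j ∈ Finset.Icc 1 n, dd 2 j t * cc (k+1) (n-j) t := by
            rw [Finset.mul_sum]
    rw [hA, hB]
    push_cast
    ring

lemma main_claim : ∀ n k : ℕ, 1 ≤ k → ∀ t : ℝ, (n:ℝ) * cc k n t = (k:ℝ) * dd k n t := by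
  intro n
  induction n using Nat.strong_induction_on with
  | _ n IH =>
    have inner : ∀ m k : ℕ, 1 ≤ k → k + m = n → ∀ t : ℝ,
        (n:ℝ) * cc k n t = (k:ℝ) * dd k n t := by
      intro m
      induction m with
      | zero =>
        intro k hk hkm t
        obtain rfl : k = n := by omega
        rw [cc_self, dd_self k hk]
      | succ m ihm =>
        intro k hk hkm t
        obtain ⟨k₀, rfl⟩ : ∃ k₀, k = k₀ + 1 := ⟨k - 1, by omega⟩
        have hn1 : 1 ≤ n := by omega
        have IHk : ∀ u : ℝ, (n:ℝ) * cc (k₀+1+1) n u = ((k₀+1+1:ℕ):ℝ) * dd (k₀+1+1) n u :=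
          fun u => ihm (k₀+1+1) (by omega) (by omega) u
        have key : ∀ u : ℝ, ∑ j ∈ Finset.Icc 1 n, dd 2 j u * cc k₀ (n-j) u
            = dd (k₀+2) n u := by
          intro u
          rcases Nat.eq_zero_or_pos k₀ with h0 | hpos
          · subst h0
            rw [Finset.sum_eq_single n]
            · rw [Nat.sub_self, cc0, if_pos rfl, mul_one]
            · intro j hj hjn
              rw [Finset.mem_Icc] at hj
              rw [cc0, if_neg (by omega), mul_zero]
            · intro h
              simp only [Finset.mem_Icc] at h
              omega
          · have e1 : ∀ j ∈ Finset.Icc 1 n, dd 2 j u * cc k₀ (n-j) u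
                = ((j:ℝ) * cc 2 j u * cc k₀ (n-j) u) / 2 := by
              intro j hj
              rw [Finset.mem_Icc] at hj
              rcases eq_or_lt_of_le hj.2 with hje | hjl
              · subst hje
                rw [Nat.sub_self, cc_of_lt k₀ 0 hpos, mul_zero, mul_zero, zero_div]
              · have hIHj := IH j hjl 2 (by omega) u
                have : dd 2 j u = (j:ℝ) * cc 2 j u / 2 := by
                  push_cast at hIHj
                  linarith
                rw [this]
                ring
            rw [Finset.sum_congr rfl e1, ← Finset.sum_div, W2lem k₀ n u]
            have hN := Nlem (k₀+1) n u
            have hI := IHk u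
            have hkne : ((k₀:ℝ)+1) + 1 ≠ 0 := by positivity
            push_cast at hN hI ⊢
            have : ((k₀:ℝ)+1+1) * W1 (k₀+1) n u = ((k₀:ℝ)+1+1) * dd (k₀+2) n u := by
              rw [hN]
              push_cast
              linarith [hI]
            have h2 := mul_left_cancel₀ hkne this
            linarith [h2]
        have hder : ∀ u : ℝ, HasDerivAt
            (fun v => (n:ℝ) * cc (k₀+1) n v - ((k₀+1:ℕ):ℝ) * dd (k₀+1) n v) 0 u := by
          intro u
          have h1 := (cc_deriv k₀ n u).const_mul (n:ℝ)
          have h2 := (dd_deriv (k₀+1) n (by omega) u).const_mul ((k₀+1:ℕ):ℝ)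
          have h3 := h1.fun_sub h2
          refine h3.congr_deriv ?_
          rw [key u]
          push_cast
          ring
        have hdiff : Differentiable ℝ
            (fun v => (n:ℝ) * cc (k₀+1) n v - ((k₀+1:ℕ):ℝ) * dd (k₀+1) n v) :=
          fun u => (hder u).differentiableAt
        have hd0 : ∀ u, deriv
            (fun v => (n:ℝ) * cc (k₀+1) n v - ((k₀+1:ℕ):ℝ) * dd (k₀+1) n v) u = 0 :=
          fun u => (hder u).deriv
        have hc := is_const_of_deriv_eq_zero hdiff hd0 t 0
        have hzero : (n:ℝ) * cc (k₀+1) n 0 - ((k₀+1:ℕ):ℝ) * dd (k₀+1) n 0 = 0 := by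
          rw [cc_zero_t (k₀+1) n (by omega) hn1, dd_zero_t (k₀+1) n hn1]
          have := Nat.add_one_mul_choose_eq (n-1) k₀
          have hrw : n - 1 + 1 = n := by omega
          rw [hrw] at this
          rw [show k₀ + 1 - 1 = k₀ by omega]
          have hreal : (n:ℝ) * ((n-1).choose k₀ : ℝ) = (n.choose (k₀+1) : ℝ) * ((k₀:ℝ)+1) := by
            exact_mod_cast congrArg (fun x : ℕ => (x : ℝ)) this
          push_cast
          linarith [hreal]
        rw [hzero] at hc
        linarith [hc]
    intro k hk t
    rcases le_or_gt k n with h | h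
    · exact inner (n - k) k hk (by omega) t
    · rw [cc_of_lt k n h, dd_of_lt k n h]
      ring

theorem stmt11 (n : ℕ) (hn : 1 ≤ n) :
    laguerreSol n 0 = 1 ∧
    ∀ t : ℝ, HasDerivAt (laguerreSol n)
      (-(n : ℝ) * ∑ j ∈ Finset.Icc 1 (n - 1), laguerreSol j t * laguerreSol (n - j) t) t := by
  constructor
  · exact s_zero_t n hn
  · intro t
    have h1 := s_deriv n hn t
    have h2 := main_claim n 2 (by norm_num) t
    have h3 : cc 2 n t = ∑ j ∈ Finset.Icc 1 (n - 1), laguerreSol j t * laguerreSol (n - j) t := by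
      rw [cc_succ]
      rw [← Finset.sum_subset (Finset.Icc_subset_Icc_right (show n - 1 ≤ n by omega))
        (fun j hj hj2 => ?_)]
      · exact Finset.sum_congr rfl fun j hj => by
          rw [Finset.mem_Icc] at hj
          rw [cc_one (n - j) (by omega)]
      · have hj' : j = n := by
          simp only [Finset.mem_Icc] at hj hj2
          omega
        rw [hj', Nat.sub_self, cc_of_lt 1 0 (by omega), mul_zero]
    have h4 : -(n:ℝ) * ∑ j ∈ Finset.Icc 1 (n - 1), laguerreSol j t * laguerreSol (n - j) t
        = -2 * dd 2 n t := by
      rw [← h3]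
      push_cast at h2
      linarith
    rw [h4]
    exact h1
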